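/- The map ψ: H → G × G defined by the action on the two subtrees (ψ(h) = (h₀, h₁) where h(0σ) = 0h₀(σ) and h(1σ) = 1h₁(σ)) is an injective group homomorphism satisfying ψ(b) = (a,c), ψ(c) = (a,d), ψ(d) = (1,b), ψ(b^a) = (c,a), ψ(c^a) = (d,a), ψ(d^a) = (b,1). -/

import Mathlib

/-- The generator `a` of the Grigorchuk group, acting on finite binary sequences. -/
def grigA : List Bool → List Bool
  | [] => []
  | x :: σ => (!x) :: σ

mutual
  /-- The generator `b` of the Grigorchuk group. -/
  def grigB : List Bool → List Bool
    | [] => []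
    | false :: σ => false :: grigA σ
    | true :: σ => true :: grigC σ
  /-- The generator `c` of the Grigorchuk group. -/
  def grigC : List Bool → List Bool
    | [] => []
    | false :: σ => false :: grigA σ
    | true :: σ => true :: grigD σ
  /-- The generator `d` of the Grigorchuk group. -/
  def grigD : List Bool → List Bool
    | [] => []
    | false :: σ => false :: σ
    | true :: σ => true :: grigB σ
end

theorem grigA_involutive : Function.Involutive grigA := by
  intro l
  rcases l with _ | ⟨x, σ⟩
  · rfl
  · cases x <;> rfl

theorem grigBCD_involutive :
    ∀ l : List Bool, grigB (grigB l) = l ∧ grigC (grigC l) = l ∧ grigD (grigD l) = l := by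
  intro l
  induction l with
  | nil => exact ⟨rfl, rfl, rfl⟩
  | cons x σ ih =>
      cases x <;>
        simp [grigB, grigC, grigD, grigA_involutive σ, ih.1, ih.2.1, ih.2.2]

theorem grigB_involutive : Function.Involutive grigB := fun l => (grigBCD_involutive l).1
theorem grigC_involutive : Function.Involutive grigC := fun l => (grigBCD_involutive l).2.1
theorem grigD_involutive : Function.Involutive grigD := fun l => (grigBCD_involutive l).2.2

/-- The generator `a` as a permutation of binary sequences. -/
def aP : Equiv.Perm (List Bool) := grigA_involutive.toPerm
/-- The generator `b` as a permutation of binary sequences. -/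
def bP : Equiv.Perm (List Bool) := grigB_involutive.toPerm
/-- The generator `c` as a permutation of binary sequences. -/
def cP : Equiv.Perm (List Bool) := grigC_involutive.toPerm
/-- The generator `d` as a permutation of binary sequences. -/
def dP : Equiv.Perm (List Bool) := grigD_involutive.toPerm

/-- The Grigorchuk group, as the group of permutations of finite binary sequences
generated by `a`, `b`, `c`, `d`. -/
def Grig : Subgroup (Equiv.Perm (List Bool)) := Subgroup.closure {aP, bP, cP, dP}

/-- `a` as an element of the Grigorchuk group. -/
def ga : Grig := ⟨aP, Subgroup.subset_closure (by simp)⟩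
/-- `b` as an element of the Grigorchuk group. -/
def gb : Grig := ⟨bP, Subgroup.subset_closure (by simp)⟩
/-- `c` as an element of the Grigorchuk group. -/
def gc : Grig := ⟨cP, Subgroup.subset_closure (by simp)⟩
/-- `d` as an element of the Grigorchuk group. -/
def gd : Grig := ⟨dP, Subgroup.subset_closure (by simp)⟩

/-- A permutation of binary sequences preserves the first letter. -/
def FixesFirst (g : Equiv.Perm (List Bool)) : Prop :=
  ∀ (x : Bool) (σ : List Bool), ∃ σ' : List Bool, g (x :: σ) = x :: σ'

/-- The defining property of the subtree-decomposition map `ψ : H → G × G`: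
`h(0σ) = 0·h₀(σ)` and `h(1σ) = 1·h₁(σ)` where `ψ(h) = (h₀, h₁)`. -/
def PsiProp (H : Subgroup Grig) (ψ : H →* Grig × Grig) : Prop :=
  ∀ (h : H) (σ : List Bool),
    ((h : Grig) : Equiv.Perm (List Bool)) (false :: σ) =
        false :: (((ψ h).1 : Grig) : Equiv.Perm (List Bool)) σ ∧
    ((h : Grig) : Equiv.Perm (List Bool)) (true :: σ) =
        true :: (((ψ h).2 : Grig) : Equiv.Perm (List Bool)) σ

section Aux

lemma aP_apply (l : List Bool) : aP l = grigA l := rfl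
lemma bP_apply (l : List Bool) : bP l = grigB l := rfl
lemma cP_apply (l : List Bool) : cP l = grigC l := rfl
lemma dP_apply (l : List Bool) : dP l = grigD l := rfl

/-- Structured form of elements of the Grigorchuk group. -/
def GData (g : Equiv.Perm (List Bool)) : Prop :=
  ∃ x : Bool, ∃ p q : Grig, g [] = [] ∧
    (∀ σ, g (false :: σ) = x :: (p : Equiv.Perm (List Bool)) σ) ∧
    (∀ σ, g (true :: σ) = (!x) :: (q : Equiv.Perm (List Bool)) σ)

lemma gdata (g : Grig) : GData (g : Equiv.Perm (List Bool)) := by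
  refine Subgroup.closure_induction ?_ ?_ ?_ ?_ g.2
  · rintro x (rfl | rfl | rfl | rfl)
    · exact ⟨true, 1, 1, rfl, fun σ => rfl, fun σ => rfl⟩
    · exact ⟨false, ga, gc, rfl, fun σ => rfl, fun σ => rfl⟩
    · exact ⟨false, ga, gd, rfl, fun σ => rfl, fun σ => rfl⟩
    · exact ⟨false, 1, gb, rfl, fun σ => rfl, fun σ => rfl⟩
  · exact ⟨false, 1, 1, rfl, fun σ => rfl, fun σ => rfl⟩
  · rintro g h _ _ ⟨x, p, q, h0, hf, ht⟩ ⟨y, p', q', h0', hf', ht'⟩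
    cases y
    · exact ⟨x, p * p', q * q', by simp [Equiv.Perm.mul_apply, h0, h0'],
        fun σ => by simp [Equiv.Perm.mul_apply, hf', hf],
        fun σ => by simp [Equiv.Perm.mul_apply, ht', ht]⟩
    · exact ⟨!x, q * p', p * q', by simp [Equiv.Perm.mul_apply, h0, h0'],
        fun σ => by simp [Equiv.Perm.mul_apply, hf', ht],
        fun σ => by simp [Equiv.Perm.mul_apply, ht', hf]⟩
  · rintro g _ ⟨x, p, q, h0, hf, ht⟩
    have key : ∀ l, (g : Equiv.Perm (List Bool))⁻¹ l =
        match l with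
        | [] => []
        | b :: σ => if b = x then false :: ((p : Equiv.Perm (List Bool)))⁻¹ σ
                    else true :: ((q : Equiv.Perm (List Bool)))⁻¹ σ := by
      intro l
      apply (g : Equiv.Perm (List Bool)).injective
      rcases l with _ | ⟨b, σ⟩
      · simpa using h0.symm
      · by_cases hb : b = x
        · subst hb
          simp [hf, Equiv.apply_symm_apply]
        · have hb' : b = !x := by cases b <;> cases x <;> simp_all
          subst hb'
          simp at hb
          cases x <;> simp_all [hf, ht, Equiv.apply_symm_apply]
    cases x
    · exact ⟨false, p⁻¹, q⁻¹, by simpa using key [],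
        fun σ => by simpa using key (false :: σ),
        fun σ => by simpa using key (true :: σ)⟩
    · exact ⟨true, q⁻¹, p⁻¹, by simpa using key [],
        fun σ => by simpa using key (false :: σ),
        fun σ => by simpa using key (true :: σ)⟩

lemma grig_nil (g : Grig) : (g : Equiv.Perm (List Bool)) [] = [] :=
  (gdata g).choose_spec.choose_spec.choose_spec.1

/-- The first-level stabilizer as a subgroup of `Grig`. -/
def Hsub : Subgroup Grig where
  carrier := {g | FixesFirst (g : Equiv.Perm (List Bool))}
  one_mem' := fun x σ => ⟨σ, rfl⟩
  mul_mem' := by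
    rintro g h hg hh x σ
    obtain ⟨σ', e'⟩ := hh x σ
    obtain ⟨σ'', e''⟩ := hg x σ'
    exact ⟨σ'', by simp [Equiv.Perm.mul_apply, e', e'']⟩
  inv_mem' := by
    rintro g hg
    obtain ⟨x, p, q, h0, hf, ht⟩ := gdata g
    obtain ⟨σ', e'⟩ := hg false []
    have hx : x = false := by
      have := e'.symm.trans (hf [])
      exact (List.cons.injEq _ _ _ _ ▸ this).1.symm
    subst hx
    intro b σ
    cases b
    · refine ⟨((p : Equiv.Perm (List Bool)))⁻¹ σ, ?_⟩
      apply (g : Equiv.Perm (List Bool)).injective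
      simp [hf, Equiv.apply_symm_apply]
    · refine ⟨((q : Equiv.Perm (List Bool)))⁻¹ σ, ?_⟩
      apply (g : Equiv.Perm (List Bool)).injective
      simp [ht, Equiv.apply_symm_apply]

lemma hsub_mem_iff (g : Grig) : g ∈ Hsub ↔ FixesFirst (g : Equiv.Perm (List Bool)) := Iff.rfl

def HSpec (h : Hsub) (pq : Grig × Grig) : Prop :=
  ∀ σ, ((h : Grig) : Equiv.Perm (List Bool)) (false :: σ) =
          false :: ((pq.1 : Grig) : Equiv.Perm (List Bool)) σ ∧
       ((h : Grig) : Equiv.Perm (List Bool)) (true :: σ) =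
          true :: ((pq.2 : Grig) : Equiv.Perm (List Bool)) σ

lemma sections (h : Hsub) : ∃! pq : Grig × Grig, HSpec h pq := by
  obtain ⟨x, p, q, h0, hf, ht⟩ := gdata (h : Grig)
  obtain ⟨σ', e'⟩ := h.2 false []
  have hx : x = false := by
    have := e'.symm.trans (hf [])
    exact (List.cons.injEq _ _ _ _ ▸ this).1.symm
  subst hx
  refine ⟨(p, q), fun σ => ⟨hf σ, ht σ⟩, ?_⟩
  rintro ⟨p', q'⟩ hs
  have hp : p' = p := by
    apply Subtype.ext; apply Equiv.ext; intro σ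
    have := ((hs σ).1).symm.trans (hf σ)
    exact (List.cons.injEq _ _ _ _ ▸ this).2
  have hq : q' = q := by
    apply Subtype.ext; apply Equiv.ext; intro σ
    have := ((hs σ).2).symm.trans (ht σ)
    exact (List.cons.injEq _ _ _ _ ▸ this).2
  simp [hp, hq]

noncomputable def psiFun (h : Hsub) : Grig × Grig := (sections h).choose

lemma psiFun_spec (h : Hsub) : HSpec h (psiFun h) := (sections h).choose_spec.1

lemma psiFun_eq {h : Hsub} {pq : Grig × Grig} (hs : HSpec h pq) : psiFun h = pq :=
  ((sections h).choose_spec.2 pq hs).symm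

lemma psiFun_mul (h₁ h₂ : Hsub) : psiFun (h₁ * h₂) = psiFun h₁ * psiFun h₂ := by
  apply psiFun_eq
  intro σ
  have s1 := psiFun_spec h₁ σ
  have s2f := (psiFun_spec h₂ σ).1
  have s2t := (psiFun_spec h₂ σ).2
  constructor
  · have := (psiFun_spec h₁ ((((psiFun h₂).1 : Grig) : Equiv.Perm (List Bool)) σ)).1
    simp only [Subgroup.coe_mul, Equiv.Perm.mul_apply, s2f, this, Prod.fst_mul]
  · have := (psiFun_spec h₁ ((((psiFun h₂).2 : Grig) : Equiv.Perm (List Bool)) σ)).2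
    simp only [Subgroup.coe_mul, Equiv.Perm.mul_apply, s2t, this, Prod.snd_mul]

noncomputable def psi : Hsub →* Grig × Grig := MonoidHom.mk' psiFun psiFun_mul

lemma psi_injective : Function.Injective psi := by
  rw [injective_iff_map_eq_one]
  intro h hh
  have hs : HSpec h (psiFun h) := psiFun_spec h
  have h1 : psiFun h = 1 := hh
  rw [h1] at hs
  apply Subtype.ext; apply Subtype.ext; apply Equiv.ext
  intro l
  rcases l with _ | ⟨b, σ⟩
  · simpa using grig_nil (h : Grig)
  · cases b
    · simpa using (hs σ).1
    · simpa using (hs σ).2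

end Aux

/-- The subtree-decomposition map `ψ : H → G × G` on the first-level stabilizer `H` of
the Grigorchuk group is an injective group homomorphism with `ψ(b) = (a,c)`,
`ψ(c) = (a,d)`, `ψ(d) = (1,b)`, `ψ(b^a) = (c,a)`, `ψ(c^a) = (d,a)`, `ψ(d^a) = (b,1)`. -/
theorem grigorchuk_psi_injective_hom :
    ∃ H : Subgroup Grig,
      (∀ g : Grig, g ∈ H ↔ FixesFirst (g : Equiv.Perm (List Bool))) ∧
      ∃ ψ : H →* Grig × Grig,
        Function.Injective ψ ∧ PsiProp H ψ ∧
        (∀ hm : gb ∈ H, ψ ⟨gb, hm⟩ = (ga, gc)) ∧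
        (∀ hm : gc ∈ H, ψ ⟨gc, hm⟩ = (ga, gd)) ∧
        (∀ hm : gd ∈ H, ψ ⟨gd, hm⟩ = (1, gb)) ∧
        (∀ hm : ga * gb * ga ∈ H, ψ ⟨ga * gb * ga, hm⟩ = (gc, ga)) ∧
        (∀ hm : ga * gc * ga ∈ H, ψ ⟨ga * gc * ga, hm⟩ = (gd, ga)) ∧
        (∀ hm : ga * gd * ga ∈ H, ψ ⟨ga * gd * ga, hm⟩ = (gb, 1)) := by
  refine ⟨Hsub, fun g => Iff.rfl, psi, psi_injective, fun h σ => psiFun_spec h σ, ?_, ?_, ?_, ?_, ?_, ?_⟩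
  · intro hm
    exact psiFun_eq (fun σ => ⟨rfl, rfl⟩)
  · intro hm
    exact psiFun_eq (fun σ => ⟨rfl, rfl⟩)
  · intro hm
    exact psiFun_eq (fun σ => ⟨rfl, rfl⟩)
  · intro hm
    exact psiFun_eq (fun σ => ⟨rfl, rfl⟩)
  · intro hm
    exact psiFun_eq (fun σ => ⟨rfl, rfl⟩)
  · intro hm
    exact psiFun_eq (fun σ => ⟨rfl, rfl⟩)
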